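/- Adding the same number of copies of the same value to two anonymized histograms leaves their sorted ℓ1 distance unchanged: for any histograms h1, h2, any positive integer t, and any k ∈ ℕ, ℓ1(h1 + k·{t}, h2 + k·{t}) = ℓ1(h1, h2), where h + k·{t} denotes the multiset obtained from h by adding k copies of t. -/

import Mathlib

/-- The `i`-th largest element (0-indexed) of a finite multiset of naturals,
taken to be `0` when `i` exceeds the number of elements. -/
def nthLargest (h : Multiset ℕ) (i : ℕ) : ℕ :=
  ((h.sort (· ≤ ·)).reverse).getD i 0

/-- The sorted ℓ1 distance `Σ_{i≥1} |n_(i)(h1) − n_(i)(h2)|` between two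
anonymized histograms.  All terms with `i ≥ h1.card + h2.card` vanish, so the
finite sum below equals the infinite sum. -/
def sortedL1 (h1 h2 : Multiset ℕ) : ℕ :=
  ∑ i ∈ Finset.range (h1.card + h2.card),
    ((nthLargest h1 i : ℤ) - (nthLargest h2 i : ℤ)).natAbs

/- Auxiliary lemmas -/

lemma aux_getD_ge_iff (l : List ℕ) (hl : l.Pairwise (· ≥ ·)) (s : ℕ) (hs : 1 ≤ s) :
    ∀ i : ℕ, s ≤ l.getD i 0 ↔ i < l.countP (fun a => s ≤ a) := by
  induction l with
  | nil => intro i; simp [List.getD]; omega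
  | cons x xs ih =>
    have hx : ∀ a ∈ xs, a ≤ x := fun a ha => (List.pairwise_cons.1 hl).1 a ha
    have hxs : xs.Pairwise (· ≥ ·) := (List.pairwise_cons.1 hl).2
    intro i
    rcases i with _ | i
    · simp only [List.getD_cons_zero, List.countP_cons]
      by_cases h : s ≤ x
      · simp [h]
      · simp only [h, decide_eq_true_eq, if_neg h, decide_false]
        have : xs.countP (fun a => s ≤ a) = 0 := by
          rw [List.countP_eq_zero]
          intro a ha
          simp only [decide_eq_true_eq]
          have := hx a ha; omega
        simp [this, h]
    · simp only [List.getD_cons_succ, List.countP_cons]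
      by_cases h : s ≤ x
      · rw [ih hxs i]
        simp [h]
      · have hz : xs.countP (fun a => s ≤ a) = 0 := by
          rw [List.countP_eq_zero]
          intro a ha
          simp only [decide_eq_true_eq]
          have := hx a ha; omega
        rw [ih hxs i, hz]
        simp [h]

lemma aux_nthLargest_ge_iff (h : Multiset ℕ) (s : ℕ) (hs : 1 ≤ s) (i : ℕ) :
    s ≤ nthLargest h i ↔ i < h.countP (fun a => s ≤ a) := by
  have hsorted : ((h.sort (· ≤ ·)).reverse).Pairwise (· ≥ ·) := by
    rw [List.pairwise_reverse]
    exact Multiset.pairwise_sort h (· ≤ ·)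
  rw [nthLargest, aux_getD_ge_iff _ hsorted s hs i, List.countP_reverse]
  have : h.countP (fun a => s ≤ a) = Multiset.countP (fun a => s ≤ a) ↑(h.sort (· ≤ ·)) := by
    rw [Multiset.sort_eq]
  rw [this, Multiset.coe_countP]

lemma aux_nthLargest_le (h : Multiset ℕ) (M : ℕ) (hM : ∀ a ∈ h, a ≤ M) (i : ℕ) :
    nthLargest h i ≤ M := by
  unfold nthLargest
  by_cases hi : i < ((h.sort (· ≤ ·)).reverse).length
  · rw [List.getD_eq_getElem _ 0 hi]
    apply hM
    have hmem : (h.sort (· ≤ ·)).reverse[i] ∈ (h.sort (· ≤ ·)).reverse :=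
      List.getElem_mem hi
    rw [List.mem_reverse] at hmem
    exact (Multiset.mem_sort (· ≤ ·)).1 hmem
  · rw [List.getD_eq_default _ 0 (by omega)]
    exact Nat.zero_le M

lemma aux_countP_le_card (h : Multiset ℕ) (p : ℕ → Prop) [DecidablePred p] :
    h.countP p ≤ Multiset.card h :=
  Multiset.countP_le_card p h

lemma aux_abs_eq_sum (a b M : ℕ) (ha : a ≤ M) (hb : b ≤ M) :
    ((a : ℤ) - b).natAbs =
      ∑ s ∈ Finset.Icc 1 M,
        (((if s ≤ a then 1 else 0 : ℤ)) - (if s ≤ b then 1 else 0)).natAbs := by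
  have key : ∀ c : ℕ, c ≤ M →
      ∑ s ∈ Finset.Icc 1 M, (if s ≤ c then (1 : ℕ) else 0) = c := by
    intro c hc
    have hf : Finset.filter (fun s => s ≤ c) (Finset.Icc 1 M) = Finset.Icc 1 c := by
      ext s
      simp only [Finset.mem_filter, Finset.mem_Icc]
      omega
    rw [← Finset.sum_filter, hf, Finset.sum_const, smul_eq_mul, mul_one, Nat.card_Icc]
    omega
  rcases le_total a b with hab | hab
  · have step : ∀ s ∈ Finset.Icc 1 M,
        (((if s ≤ a then 1 else 0 : ℤ)) - (if s ≤ b then 1 else 0)).natAbs =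
          (if s ≤ b then (1 : ℕ) else 0) - (if s ≤ a then (1 : ℕ) else 0) := by
      intro s _
      split_ifs with h1 h2 h2 <;> simp_all <;> omega
    rw [Finset.sum_congr rfl step,
      Finset.sum_tsub_distrib _ (by intro s _; split_ifs with h1 h2 <;> omega),
      key a ha, key b hb]
    omega
  · have step : ∀ s ∈ Finset.Icc 1 M,
        (((if s ≤ a then 1 else 0 : ℤ)) - (if s ≤ b then 1 else 0)).natAbs =
          (if s ≤ a then (1 : ℕ) else 0) - (if s ≤ b then (1 : ℕ) else 0) := by
      intro s _
      split_ifs with h1 h2 h2 <;> simp_all <;> omega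
    rw [Finset.sum_congr rfl step,
      Finset.sum_tsub_distrib _ (by intro s _; split_ifs with h1 h2 <;> omega),
      key a ha, key b hb]
    omega

lemma aux_sum_ind_range (N A B : ℕ) (hA : A ≤ N) (hB : B ≤ N) :
    ∑ i ∈ Finset.range N,
        (((if i < A then 1 else 0 : ℤ)) - (if i < B then 1 else 0)).natAbs
      = ((A : ℤ) - B).natAbs := by
  rcases le_total A B with hab | hab
  · have step : ∀ i ∈ Finset.range N,
        (((if i < A then 1 else 0 : ℤ)) - (if i < B then 1 else 0)).natAbs =
          (if i ∈ Finset.Ico A B then (1 : ℕ) else 0) := by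
      intro i _
      simp only [Finset.mem_Ico]
      split_ifs with h1 h2 h3 <;> simp_all <;> omega
    rw [Finset.sum_congr rfl step, Finset.sum_ite_mem]
    have : Finset.range N ∩ Finset.Ico A B = Finset.Ico A B := by
      ext i
      simp only [Finset.mem_inter, Finset.mem_range, Finset.mem_Ico]
      omega
    rw [this]
    simp [Nat.card_Ico]
    omega
  · have step : ∀ i ∈ Finset.range N,
        (((if i < A then 1 else 0 : ℤ)) - (if i < B then 1 else 0)).natAbs =
          (if i ∈ Finset.Ico B A then (1 : ℕ) else 0) := by
      intro i _
      simp only [Finset.mem_Ico]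
      split_ifs with h1 h2 h3 <;> simp_all <;> omega
    rw [Finset.sum_congr rfl step, Finset.sum_ite_mem]
    have : Finset.range N ∩ Finset.Ico B A = Finset.Ico B A := by
      ext i
      simp only [Finset.mem_inter, Finset.mem_range, Finset.mem_Ico]
      omega
    rw [this]
    simp [Nat.card_Ico]
    omega

lemma aux_sortedL1_eq (h1 h2 : Multiset ℕ) (M : ℕ)
    (hM1 : ∀ a ∈ h1, a ≤ M) (hM2 : ∀ a ∈ h2, a ≤ M) :
    sortedL1 h1 h2 = ∑ s ∈ Finset.Icc 1 M,
      ((h1.countP (fun a => s ≤ a) : ℤ) - (h2.countP (fun a => s ≤ a))).natAbs := by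
  unfold sortedL1
  set N := Multiset.card h1 + Multiset.card h2 with hN
  have step1 : ∀ i ∈ Finset.range N,
      ((nthLargest h1 i : ℤ) - (nthLargest h2 i : ℤ)).natAbs =
        ∑ s ∈ Finset.Icc 1 M,
          (((if s ≤ nthLargest h1 i then 1 else 0 : ℤ))
            - (if s ≤ nthLargest h2 i then 1 else 0)).natAbs := by
    intro i _
    exact aux_abs_eq_sum _ _ M (aux_nthLargest_le h1 M hM1 i) (aux_nthLargest_le h2 M hM2 i)
  rw [Finset.sum_congr rfl step1, Finset.sum_comm]
  refine Finset.sum_congr rfl ?_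
  intro s hs
  have hs1 : 1 ≤ s := (Finset.mem_Icc.1 hs).1
  have step2 : ∀ i ∈ Finset.range N,
      (((if s ≤ nthLargest h1 i then 1 else 0 : ℤ))
        - (if s ≤ nthLargest h2 i then 1 else 0)).natAbs =
      (((if i < h1.countP (fun a => s ≤ a) then 1 else 0 : ℤ))
        - (if i < h2.countP (fun a => s ≤ a) then 1 else 0)).natAbs := by
    intro i _
    simp only [aux_nthLargest_ge_iff h1 s hs1 i, aux_nthLargest_ge_iff h2 s hs1 i]
  rw [Finset.sum_congr rfl step2]
  exact aux_sum_ind_range N _ _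
    (le_trans (aux_countP_le_card h1 _) (by omega))
    (le_trans (aux_countP_le_card h2 _) (by omega))

/-- Adding `k` copies of the same value `t` to two histograms leaves their
sorted ℓ1 distance unchanged. -/
theorem sortedL1_add_replicate (h1 h2 : Multiset ℕ) (t : ℕ) (ht : 0 < t) (k : ℕ)
    (hp1 : ∀ a ∈ h1, 0 < a) (hp2 : ∀ a ∈ h2, 0 < a) :
    sortedL1 (h1 + Multiset.replicate k t) (h2 + Multiset.replicate k t) =
      sortedL1 h1 h2 := by
  set M := t + h1.sum + h2.sum with hM
  have hb1 : ∀ a ∈ h1, a ≤ M := by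
    intro a ha
    have := Multiset.single_le_sum (fun x _ => Nat.zero_le x) a ha
    omega
  have hb2 : ∀ a ∈ h2, a ≤ M := by
    intro a ha
    have := Multiset.single_le_sum (fun x _ => Nat.zero_le x) a ha
    omega
  have hb1' : ∀ a ∈ h1 + Multiset.replicate k t, a ≤ M := by
    intro a ha
    rcases Multiset.mem_add.1 ha with h | h
    · exact hb1 a h
    · have := Multiset.eq_of_mem_replicate h
      omega
  have hb2' : ∀ a ∈ h2 + Multiset.replicate k t, a ≤ M := by
    intro a ha
    rcases Multiset.mem_add.1 ha with h | h
    · exact hb2 a h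
    · have := Multiset.eq_of_mem_replicate h
      omega
  rw [aux_sortedL1_eq _ _ M hb1' hb2', aux_sortedL1_eq h1 h2 M hb1 hb2]
  refine Finset.sum_congr rfl ?_
  intro s _
  rw [Multiset.countP_add, Multiset.countP_add]
  push_cast
  ring_nf
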